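/- arXiv:2508.18946 — 2 statements merged into one kernel-verified Lean document; each statement's English description precedes it below -/
import Mathlib

section
/- Let a, n, p ∈ ℤ with a ≥ 1, n ≥ 2 and p a prime. Then f_{n,a,p}(x) = x^n − a·x^{n−1} − p is irreducible over ℚ if and only if it is not the case that n is even and p = a + 1. -/
open Polynomial

/-- The polynomial `f_{n,a,p}(x) = x^n - a*x^(n-1) - p` in `ℤ[x]`. -/
noncomputable def fnap (n : ℕ) (a p : ℤ) : Polynomial ℤ :=
  X ^ n - C a * X ^ (n - 1) - C p


lemma fnap_eq (n : ℕ) (a p : ℤ) : fnap n a p = X ^ n - (C a * X ^ (n - 1) + C p) := by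
  rw [fnap]; ring

lemma fnap_deg_lt (n : ℕ) (a p : ℤ) (hn : 2 ≤ n) :
    (C a * X ^ (n - 1) + C p).degree < ((n : ℕ) : WithBot ℕ) := by
  apply lt_of_le_of_lt (degree_add_le _ _)
  rw [max_lt_iff]
  constructor
  · apply lt_of_le_of_lt (degree_mul_le _ _)
    apply lt_of_le_of_lt (add_le_add degree_C_le (le_of_eq (degree_X_pow _)))
    rw [zero_add]
    exact_mod_cast Nat.sub_lt (by omega) one_pos
  · exact lt_of_le_of_lt degree_C_le (by exact_mod_cast Nat.pos_of_ne_zero (by omega))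

lemma fnap_monic (n : ℕ) (a p : ℤ) (hn : 2 ≤ n) : (fnap n a p).Monic := by
  rw [fnap_eq]
  exact monic_X_pow_sub (fnap_deg_lt n a p hn)

lemma fnap_natDegree (n : ℕ) (a p : ℤ) (hn : 2 ≤ n) : (fnap n a p).natDegree = n := by
  rw [fnap_eq]
  have h2 : (X ^ n - (C a * X ^ (n-1) + C p) : ℤ[X]).degree = ((n:ℕ) : WithBot ℕ) := by
    rw [degree_sub_eq_left_of_degree_lt, degree_X_pow]
    rw [degree_X_pow]; exact fnap_deg_lt n a p hn
  exact natDegree_eq_of_degree_eq_some h2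



lemma keyA (n : ℕ) (a : ℤ) (p : ℕ) (hn : 2 ≤ n) (g : ℤ[X]) (hg : g.Monic)
    (hdvd : g ∣ fnap n a (p : ℤ)) :
    |g.eval 0| ^ (n - 1) * |g.eval a| = (p : ℤ) ^ g.natDegree := by
  set G : ℂ[X] := g.map (Int.castRingHom ℂ) with hG
  have hGm : G.Monic := hg.map _
  have hcard : Multiset.card G.roots = G.natDegree :=
    splits_iff_card_roots.mp (IsAlgClosed.splits G)
  have hndeg : G.natDegree = g.natDegree := hg.natDegree_map _
  set m : Multiset ℂ := G.roots with hm
  have hprod : (m.map fun α => X - C α).prod = G := by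
    have := C_leadingCoeff_mul_prod_multiset_X_sub_C (p := G) hcard
    rwa [hGm.leadingCoeff, map_one, one_mul] at this
  -- evaluation formula
  have heval : ∀ z : ℂ, ‖G.eval z‖ = (m.map fun α => ‖z - α‖).prod := by
    intro z
    conv_lhs => rw [← hprod]
    rw [eval_multiset_prod, show ∀ s : Multiset ℂ, ‖s.prod‖ = (s.map (‖·‖)).prod from
      fun s => map_multiset_prod (normHom (α := ℂ)) s, Multiset.map_map, Multiset.map_map]
    congr 1
    apply Multiset.map_congr rfl
    intro α hα
    simp
  -- each root satisfies the relation
  have hroot : ∀ α ∈ m, ‖α‖ ^ (n - 1) * ‖(a : ℂ) - α‖ = (p : ℝ) := by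
    intro α hα
    have hα0 : (fnap n a (p:ℤ)).eval₂ (Int.castRingHom ℂ) α = 0 := by
      have hdvd' : G ∣ (fnap n a (p:ℤ)).map (Int.castRingHom ℂ) := Polynomial.map_dvd _ hdvd
      have : IsRoot G α := isRoot_of_mem_roots hα
      have h2 : ((fnap n a (p:ℤ)).map (Int.castRingHom ℂ)).eval α = 0 := by
        obtain ⟨c, hc⟩ := hdvd'
        rw [hc, eval_mul, this.eq_zero, zero_mul]
      rwa [eval_map] at h2
    rw [fnap] at hα0
    simp only [eval₂_sub, eval₂_mul, eval₂_pow, eval₂_X, eval₂_C] at hα0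
    have hrel : α ^ (n - 1) * (α - (a : ℂ)) = (p : ℂ) := by
      simp only [eq_intCast] at hα0
      have hpow : α ^ n = α ^ (n - 1) * α := by
        rw [← pow_succ]; congr 1; omega
      rw [hpow] at hα0
      push_cast at hα0 ⊢
      linear_combination hα0
    have := congrArg (‖·‖) hrel
    rw [norm_mul, norm_pow, Complex.norm_natCast] at this
    rw [← this, norm_sub_rev]
  -- combine
  have hcombine : (‖G.eval 0‖) ^ (n - 1) * ‖G.eval (a : ℂ)‖
      = (p : ℝ) ^ Multiset.card m := by
    rw [heval 0, heval (a : ℂ), ← Multiset.prod_map_pow, ← Multiset.prod_map_mul]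
    have : (m.map fun α => ‖0 - α‖ ^ (n - 1) * ‖(a:ℂ) - α‖).prod
        = (m.map fun _ => (p : ℝ)).prod := by
      congr 1
      apply Multiset.map_congr rfl
      intro α hα
      rw [zero_sub, norm_neg]
      exact hroot α hα
    rw [this, Multiset.map_const', Multiset.prod_replicate]
  have h0 : ‖G.eval 0‖ = ((|g.eval 0| : ℤ) : ℝ) := by
    have : G.eval ((0 : ℤ) : ℂ) = ((g.eval 0 : ℤ) : ℂ) := eval_intCast_map _ _ _
    simp only [Int.cast_zero] at this
    rw [this, Complex.norm_intCast]
    push_cast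
    ring
  have h1 : ‖G.eval (a:ℂ)‖ = ((|g.eval a| : ℤ) : ℝ) := by
    have : G.eval ((a : ℤ) : ℂ) = ((g.eval a : ℤ) : ℂ) := eval_intCast_map _ _ _
    rw [this, Complex.norm_intCast]
    push_cast
    ring
  rw [h0, h1, hcard, hndeg] at hcombine
  exact_mod_cast hcombine

lemma fnap_eval_zero (n : ℕ) (a : ℤ) (p : ℤ) (hn : 2 ≤ n) : (fnap n a p).eval 0 = -p := by
  simp [fnap, zero_pow (show n ≠ 0 by omega), zero_pow (show n - 1 ≠ 0 by omega)]

lemma fnap_eval_a (n : ℕ) (a : ℤ) (p : ℤ) (hn : 2 ≤ n) : (fnap n a p).eval a = -p := by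
  simp only [fnap, eval_sub, eval_mul, eval_pow, eval_X, eval_C]
  have h : a ^ n = a * a ^ (n - 1) := by
    rw [← pow_succ']; congr 1; omega
  linarith

lemma lemB (a : ℤ) (n : ℕ) (p : ℕ) (ha : 1 ≤ a) (hn : 2 ≤ n) (hp : p.Prime)
    (hnp : ¬ (Even n ∧ (p : ℤ) = a + 1))
    (g h : ℤ[X]) (hgm : g.Monic) (hF : fnap n a (p : ℤ) = g * h)
    (hdg : 1 ≤ g.natDegree) (hg0 : |g.eval 0| = 1) : False := by
  have hp2 : (2 : ℤ) ≤ (p : ℤ) := by exact_mod_cast hp.two_le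
  have hga : |g.eval a| = (p : ℤ) ^ g.natDegree := by
    have := keyA n a p hn g hgm ⟨h, hF⟩
    rwa [hg0, one_pow, one_mul] at this
  have hprodeval : g.eval a * h.eval a = -(p : ℤ) := by
    rw [← eval_mul, ← hF, fnap_eval_a n a p hn]
  have habs : |g.eval a| * |h.eval a| = (p : ℤ) := by
    rw [← abs_mul, hprodeval, abs_neg, abs_of_nonneg (by positivity)]
  have hha : 1 ≤ |h.eval a| := by
    rcases eq_or_ne (h.eval a) 0 with h0 | h0
    · rw [h0, mul_zero] at hprodeval; omega
    · exact Int.one_le_abs (by simpa using h0)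
  have hdeg1 : g.natDegree = 1 := by
    by_contra hne
    have h2 : 2 ≤ g.natDegree := by omega
    have : (p : ℤ) ^ 2 ≤ (p : ℤ) ^ g.natDegree := pow_le_pow_right₀ (by omega) h2
    have hle : (p : ℤ) ^ g.natDegree ≤ (p : ℤ) := by nlinarith [hga, habs, hha]
    nlinarith
  have hgX : g = X + C (g.coeff 0) := hgm.eq_X_add_C hdeg1
  have hg0' : |g.coeff 0| = 1 := by
    have : g.eval 0 = g.coeff 0 := by rw [hgX]; simp
    rwa [this] at hg0
  set c := g.coeff 0 with hc
  have hroot : (fnap n a (p:ℤ)).eval (-c) = 0 := by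
    rw [hF, eval_mul, hgX]
    simp
  rw [fnap] at hroot
  simp only [eval_sub, eval_mul, eval_pow, eval_X, eval_C] at hroot
  rcases abs_eq (by norm_num : (0:ℤ) ≤ 1) |>.mp hg0' with hc1 | hc1
  · -- c = 1, root is -1
    rw [hc1] at hroot
    rcases Nat.even_or_odd n with hev | hodd
    · have h1 : ((-1 : ℤ)) ^ n = 1 := hev.neg_one_pow
      have h2 : ((-1 : ℤ)) ^ (n - 1) = -1 := by
        have : Odd (n - 1) := Nat.Even.sub_odd (by omega) hev odd_one
        exact this.neg_one_pow
      rw [h1, h2] at hroot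
      exact hnp ⟨hev, by linarith⟩
    · have h1 : ((-1 : ℤ)) ^ n = -1 := hodd.neg_one_pow
      have h2 : ((-1 : ℤ)) ^ (n - 1) = 1 := by
        have : Even (n - 1) := Nat.Odd.sub_odd hodd odd_one
        exact this.neg_one_pow
      rw [h1, h2] at hroot
      linarith
  · -- c = -1, root is 1
    rw [hc1] at hroot
    simp only [neg_neg, one_pow] at hroot
    linarith

lemma fnap_irred_int (a : ℤ) (n : ℕ) (p : ℕ) (ha : 1 ≤ a) (hn : 2 ≤ n) (hp : p.Prime)
    (hnp : ¬ (Even n ∧ (p : ℤ) = a + 1)) : Irreducible (fnap n a (p : ℤ)) := by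
  have hm := fnap_monic n a (p : ℤ) hn
  have hd := fnap_natDegree n a (p : ℤ) hn
  constructor
  · exact not_isUnit_of_natDegree_pos _ (by omega)
  · intro g h hF
    by_contra hcon
    push_neg at hcon
    obtain ⟨hgu, hhu⟩ := hcon
    -- leading coefficients
    have hlc : g.leadingCoeff * h.leadingCoeff = 1 := by
      have := hm
      rw [Monic, hF, leadingCoeff_mul] at this
      exact this
    -- normalize to monic
    obtain ⟨g', h', hg'm, hh'm, hF', hgu', hhu'⟩ :
        ∃ g' h' : ℤ[X], g'.Monic ∧ h'.Monic ∧ fnap n a (p:ℤ) = g' * h' ∧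
          ¬ IsUnit g' ∧ ¬ IsUnit h' := by
      rcases Int.isUnit_iff.mp (IsUnit.of_mul_eq_one _ hlc) with h1 | h1
      · refine ⟨g, h, h1, ?_, hF, hgu, hhu⟩
        have := hlc; rw [h1, one_mul] at this; exact this
      · refine ⟨-g, -h, ?_, ?_, by rw [hF]; ring, ?_, ?_⟩
        · show (-g).leadingCoeff = 1
          rw [leadingCoeff_neg, h1]; ring
        · show (-h).leadingCoeff = 1
          rw [leadingCoeff_neg]
          have := hlc; rw [h1] at this; linarith
        · simpa using hgu
        · simpa using hhu
    clear hF hlc hgu hhu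
    have hdg : 1 ≤ g'.natDegree := by
      by_contra hc
      exact hgu' (hg'm.natDegree_eq_zero.mp (by omega) ▸ isUnit_one)
    have hdh : 1 ≤ h'.natDegree := by
      by_contra hc
      exact hhu' (hh'm.natDegree_eq_zero.mp (by omega) ▸ isUnit_one)
    -- eval at zero
    have h0 : g'.eval 0 * h'.eval 0 = -(p : ℤ) := by
      rw [← eval_mul, ← hF', fnap_eval_zero n a p hn]
    have habs : |g'.eval 0| * |h'.eval 0| = (p : ℤ) := by
      rw [← abs_mul, h0, abs_neg, abs_of_nonneg (by positivity)]
    have hnat : (g'.eval 0).natAbs * (h'.eval 0).natAbs = p := by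
      have := congrArg Int.natAbs habs
      rwa [Int.natAbs_mul, Int.natAbs_abs, Int.natAbs_abs, Int.natAbs_natCast] at this
    rcases hp.eq_one_or_self_of_dvd (g'.eval 0).natAbs ⟨_, hnat.symm⟩ with h1 | h1
    · exact lemB a n p ha hn hp hnp g' h' hg'm hF' hdg
        (by rw [Int.abs_eq_natAbs, h1]; rfl)
    · have h2 : (h'.eval 0).natAbs = 1 := by
        have hpos := hp.pos
        have heq : p * (h'.eval 0).natAbs = p * 1 := by
          rw [mul_one]; rw [h1] at hnat; exact hnat
        exact Nat.eq_of_mul_eq_mul_left hpos heq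
      exact lemB a n p ha hn hp hnp h' g' hh'm (by rw [hF', mul_comm]) hdh
        (by rw [Int.abs_eq_natAbs, h2]; rfl)

theorem stmt_3 (a : ℤ) (n : ℕ) (p : ℕ) (ha : 1 ≤ a) (hn : 2 ≤ n) (hp : p.Prime) :
    Irreducible ((fnap n a (p : ℤ)).map (algebraMap ℤ ℚ)) ↔
      ¬ (Even n ∧ (p : ℤ) = a + 1) := by
  have hm := fnap_monic n a (p : ℤ) hn
  have hd := fnap_natDegree n a (p : ℤ) hn
  constructor
  · intro hirr
    rintro ⟨hev, hpa⟩
    set Q := (fnap n a (p : ℤ)).map (algebraMap ℤ ℚ) with hQ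
    have hQd : Q.natDegree = n := by
      rw [hQ, (hm.natDegree_map _), hd]
    have hroot : Q.eval (-1) = 0 := by
      rw [hQ, fnap]
      simp only [Polynomial.map_sub, Polynomial.map_mul, Polynomial.map_pow, Polynomial.map_X,
        map_C, eval_sub, eval_mul, eval_pow, eval_X, eval_C]
      have h1 : ((-1 : ℚ)) ^ n = 1 := hev.neg_one_pow
      have h2 : ((-1 : ℚ)) ^ (n - 1) = -1 := by
        exact (Nat.Even.sub_odd (by omega) hev odd_one).neg_one_pow
      rw [h1, h2]
      have : ((p : ℤ) : ℚ) = ((a : ℚ) + 1) := by exact_mod_cast congrArg (Int.cast : ℤ → ℚ) hpa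
      simp only [eq_intCast, algebraMap_int_eq] at *
      push_cast
      push_cast at this
      linarith
    have hdvd : (X - C (-1 : ℚ)) ∣ Q := dvd_iff_isRoot.mpr hroot
    obtain ⟨u, hu⟩ := hdvd
    rcases hirr.isUnit_or_isUnit hu with h1 | h1
    · exact (not_isUnit_of_natDegree_pos _ (by rw [natDegree_X_sub_C]; norm_num)) h1
    · have : u.natDegree = 0 := natDegree_eq_zero_of_isUnit h1
      have hQd' : Q.natDegree = 1 := by
        rw [hu, natDegree_mul (X_sub_C_ne_zero _) (by
          rintro rfl; exact h1.ne_zero rfl), natDegree_X_sub_C, this]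
      omega
  · intro hnp
    have := fnap_irred_int a n p ha hn hp hnp
    rw [show algebraMap ℤ ℚ = Int.castRingHom ℚ from rfl]
    exact (Polynomial.IsPrimitive.Int.irreducible_iff_irreducible_map_cast hm.isPrimitive).mp this
end

section
/- Let n ≥ 2 and let f(x) = x^n + a_{n−1}x^{n−1} + a_{n−2}x^{n−2} + ⋯ + a_1 x + a_0 ∈ ℤ[x] with a_0 ≠ 0. If |a_{n−1}| = 1 + |a_{n−2}| + |a_{n−3}| + ⋯ + |a_0| and f(1) ≠ 0 and f(−1) ≠ 0, then f is irreducible over ℚ. -/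
open Polynomial

noncomputable def Complex.abs : AbsoluteValue ℂ ℝ where
  toFun := fun z => ‖z‖
  map_mul' := norm_mul
  nonneg' := norm_nonneg
  eq_zero' := fun _ => norm_eq_zero
  add_le' := norm_add_le

@[simp] theorem Complex.abs_apply (z : ℂ) : Complex.abs z = ‖z‖ := rfl

theorem Complex.norm_eq_abs (z : ℂ) : ‖z‖ = Complex.abs z := rfl

theorem Complex.abs_intCast (n : ℤ) : Complex.abs (n : ℂ) = |(n : ℝ)| := Complex.norm_intCast n

theorem Complex.sq_abs (z : ℂ) : Complex.abs z ^ 2 = Complex.normSq z := Complex.sq_norm z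

lemma aux_prod_lt_one (s : Multiset ℝ) (hne : s ≠ 0) (h : ∀ x ∈ s, 0 ≤ x ∧ x < 1) :
    s.prod < 1 := by
  induction s using Multiset.induction_on with
  | empty => exact absurd rfl hne
  | cons a t ih =>
    rw [Multiset.prod_cons]
    obtain ⟨ha0, ha1⟩ := h a (Multiset.mem_cons_self a t)
    rcases eq_or_ne t 0 with rfl | ht
    · simpa using ha1
    · have ht1 := ih ht (fun x hx => h x (Multiset.mem_cons_of_mem hx))
      have ht0 : 0 ≤ t.prod := Multiset.prod_nonneg fun x hx => (h x (Multiset.mem_cons_of_mem hx)).1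
      nlinarith

-- Lemma A: no root on the unit circle
lemma aux_no_unit_root (m : ℕ) (f : ℤ[X]) (hmonic : f.Monic)
    (hdeg : f.natDegree = m + 2)
    (hdom : |f.coeff (m+1)| = 1 + ∑ i ∈ Finset.range (m+1), |f.coeff i|)
    (h1 : f.eval 1 ≠ 0) (hm1 : f.eval (-1) ≠ 0)
    (z : ℂ) (hz : (f.map (algebraMap ℤ ℂ)).eval z = 0) : Complex.abs z ≠ 1 := by
  intro habs
  set F := f.map (algebraMap ℤ ℂ) with hF
  have hFdeg : F.natDegree = m + 2 := by rw [hF, hmonic.natDegree_map, hdeg]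
  have hcoeff : ∀ i, F.coeff i = ((f.coeff i : ℤ) : ℂ) := fun i => Polynomial.coeff_map _ i
  have htop : F.coeff (m+2) = 1 := by
    have := (hmonic.map (algebraMap ℤ ℂ)).coeff_natDegree
    rwa [hFdeg] at this
  have heval := Polynomial.eval_eq_sum_range (p := F) (x := z)
  rw [hFdeg, hz] at heval
  rw [Finset.sum_range_succ, Finset.sum_range_succ, htop] at heval
  -- 0 = Σ_{i<m+1} F_i z^i + F_{m+1} z^{m+1} + z^{m+2}
  have key : z^(m+1) * (z + (f.coeff (m+1) : ℂ)) = -∑ i ∈ Finset.range (m+1), F.coeff i * z ^ i := by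
    rw [hcoeff (m+1)] at heval
    ring_nf
    ring_nf at heval
    have hc : ∀ s : Finset ℕ, ∑ x ∈ s, z ^ x * F.coeff x = ∑ x ∈ s, F.coeff x * z ^ x :=
      fun s => Finset.sum_congr rfl fun x _ => mul_comm _ _
    simp only [hc]
    linear_combination -heval
  have habs2 : Complex.abs (z + (f.coeff (m+1) : ℂ)) ≤ (|f.coeff (m+1)| : ℝ) - 1 := by
    have h1' : Complex.abs (z^(m+1) * (z + (f.coeff (m+1) : ℂ)))
        = Complex.abs (z + (f.coeff (m+1) : ℂ)) := by
      rw [map_mul, map_pow, habs, one_pow, one_mul]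
    have h2' : Complex.abs (-∑ i ∈ Finset.range (m+1), F.coeff i * z ^ i)
        ≤ ∑ i ∈ Finset.range (m+1), (|f.coeff i| : ℝ) := by
      rw [map_neg_eq_map]
      refine le_trans (Complex.abs.sum_le _ _) (Finset.sum_le_sum fun i _ => ?_)
      rw [map_mul, map_pow, habs, one_pow, mul_one, hcoeff, Complex.abs_intCast]
    calc Complex.abs (z + (f.coeff (m+1) : ℂ)) ≤ ∑ i ∈ Finset.range (m+1), (|f.coeff i| : ℝ) := by
          rw [← h1', key]; exact h2'
      _ = (|f.coeff (m+1)| : ℝ) - 1 := by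
          have := hdom
          have : (|f.coeff (m+1)| : ℝ) = 1 + ∑ i ∈ Finset.range (m+1), (|f.coeff i| : ℝ) := by
            exact_mod_cast congrArg (fun t : ℤ => (t : ℝ)) hdom
          linarith
  -- now derive z = ±1
  set a : ℤ := f.coeff (m+1) with ha
  have hA : (1:ℝ) ≤ |(a:ℝ)| := by
    have hsum : (0:ℤ) ≤ ∑ i ∈ Finset.range (m+1), |f.coeff i| :=
      Finset.sum_nonneg fun i _ => abs_nonneg _
    have : (1:ℤ) ≤ |a| := by rw [ha, hdom]; linarith
    calc (1:ℝ) ≤ ((|a| : ℤ) : ℝ) := by exact_mod_cast this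
      _ = |(a:ℝ)| := by push_cast; ring
  have hcast : (|a| : ℝ) = |(a:ℝ)| := by push_cast; ring
  rw [hcast] at habs2
  set x := z.re with hx
  set y := z.im with hy
  have hxy : x^2 + y^2 = 1 := by
    have := Complex.sq_abs z
    rw [habs, Complex.normSq_apply] at this
    nlinarith [this]
  have hre : (z + (a:ℂ)).re = x + (a:ℝ) := by simp [hx]
  have him : (z + (a:ℂ)).im = y := by simp [hy]
  have hsq : (x + (a:ℝ))^2 + y^2 ≤ (|(a:ℝ)| - 1)^2 := by
    have h1' : Complex.abs (z + (a:ℂ)) ^ 2 ≤ (|(a:ℝ)| - 1)^2 := by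
      have hnn : (0:ℝ) ≤ |(a:ℝ)| - 1 := by linarith
      nlinarith [Complex.abs.nonneg (z + (a:ℂ))]
    have h2' := Complex.sq_abs (z + (a:ℂ))
    rw [Complex.normSq_apply, hre, him] at h2'
    nlinarith [h2']
  have hax : (a:ℝ) * x ≤ -|(a:ℝ)| := by nlinarith [abs_nonneg (a:ℝ), sq_abs (a:ℝ)]
  have hx2 : x^2 ≤ 1 := by nlinarith [sq_nonneg y]
  have h5 : |(a:ℝ)| ≤ |(a:ℝ)| * |x| := by
    have h6 : -((a:ℝ)*x) ≤ |(a:ℝ)*x| := neg_le_abs _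
    rw [abs_mul] at h6; linarith
  have hx1 : 1 ≤ |x| := by nlinarith [abs_nonneg x]
  have hxe : |x| = 1 := le_antisymm (by nlinarith [sq_abs x, abs_nonneg x]) hx1
  have hx2e : x^2 = 1 := by rw [← sq_abs, hxe]; norm_num
  have hy0 : y = 0 := by
    have hysq : y^2 = 0 := by linarith
    exact pow_eq_zero_iff (two_ne_zero) |>.mp hysq
  have hev : ∀ t : ℤ, F.eval ((t:ℤ):ℂ) = ((f.eval t : ℤ) : ℂ) := by
    intro t
    rw [hF, Polynomial.eval_map]
    have := Polynomial.eval₂_at_apply (algebraMap ℤ ℂ) (p := f) t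
    simp only [algebraMap_int_eq, eq_intCast] at this ⊢
    exact this
  rcases (abs_eq (by norm_num : (0:ℝ) ≤ 1)).mp hxe with hx1' | hx1'
  · have hz1 : z = 1 := by
      apply Complex.ext <;> simp [← hx, ← hy, hx1', hy0]
    apply h1
    have := hev 1
    rw [hz1] at hz
    simp only [Int.cast_one] at this
    rw [this] at hz
    exact_mod_cast hz
  · have hz1 : z = -1 := by
      apply Complex.ext <;> simp [← hx, ← hy, hx1', hy0]
    apply hm1
    have := hev (-1)
    rw [hz1] at hz
    simp only [Int.cast_neg, Int.cast_one] at this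
    rw [this] at hz
    exact_mod_cast hz

lemma aux_root_prod (p : Polynomial ℂ) (hp : p.Monic) :
    Complex.abs (p.coeff 0) = (p.roots.map Complex.abs).prod := by
  have h := (prod_multiset_X_sub_C_of_monic_of_roots_card_eq hp IsAlgClosed.card_roots_eq_natDegree).symm
  conv_lhs => rw [Polynomial.coeff_zero_eq_eval_zero, h]
  rw [Polynomial.eval_multiset_prod, map_multiset_prod Complex.abs, Multiset.map_map,
      Multiset.map_map]
  congr 1
  refine Multiset.map_congr rfl fun r _ => ?_
  simp


lemma aux_card_roots (p : Polynomial ℂ) :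
    Multiset.card p.roots = p.natDegree := by
  exact IsAlgClosed.card_roots_eq_natDegree


theorem stmt_14 (n : ℕ) (hn : 2 ≤ n) (f : Polynomial ℤ) (hmonic : f.Monic)
    (hdeg : f.natDegree = n) (h0 : f.coeff 0 ≠ 0)
    (hdom : |f.coeff (n - 1)| = 1 + ∑ i ∈ Finset.range (n - 1), |f.coeff i|)
    (h1 : f.eval 1 ≠ 0) (hm1 : f.eval (-1) ≠ 0) :
    Irreducible (f.map (algebraMap ℤ ℚ)) := by
  subst hdeg
  obtain ⟨m, hm⟩ : ∃ m, f.natDegree = m + 2 := ⟨f.natDegree - 2, by omega⟩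
  rw [hm] at hdom
  norm_num at hdom
  -- hdom : |f.coeff (m+1)| = 1 + ∑ i ∈ range (m+1), |f.coeff i|
  rw [← hmonic.irreducible_iff_irreducible_map_fraction_map]
  set F := f.map (algebraMap ℤ ℂ) with hF
  have hFmonic : F.Monic := hmonic.map _
  have hFdeg : F.natDegree = m + 2 := by rw [hF, hmonic.natDegree_map, hm]
  have hFne : F ≠ 0 := hFmonic.ne_zero
  have lemA : ∀ z : ℂ, F.eval z = 0 → Complex.abs z ≠ 1 :=
    aux_no_unit_root m f hmonic hm hdom h1 hm1
  have habsint : ∀ (g : Polynomial ℤ), g.coeff 0 ≠ 0 →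
      (1:ℝ) ≤ Complex.abs ((g.map (algebraMap ℤ ℂ)).coeff 0) := by
    intro g hg
    rw [Polynomial.coeff_map]
    simp only [algebraMap_int_eq, eq_intCast, Complex.abs_intCast]
    exact_mod_cast Int.one_le_abs hg
  -- existence of a root of modulus > 1
  obtain ⟨z₁, hz₁root, hz₁⟩ : ∃ z, F.eval z = 0 ∧ 1 < Complex.abs z := by
    by_contra hcon
    push_neg at hcon
    have hprod := aux_root_prod F hFmonic
    have hcard : Multiset.card F.roots = m + 2 := by rw [aux_card_roots, hFdeg]
    have hlt : (F.roots.map Complex.abs).prod < 1 := by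
      apply aux_prod_lt_one
      · intro h'
        rw [Multiset.map_eq_zero] at h'
        rw [h'] at hcard
        simp at hcard
      · intro x hx
        rw [Multiset.mem_map] at hx
        obtain ⟨r, hr, rfl⟩ := hx
        have hroot : F.eval r = 0 := (Polynomial.mem_roots'.mp hr).2
        exact ⟨Complex.abs.nonneg r, lt_of_le_of_ne (hcon r hroot) (lemA r hroot)⟩
    have := habsint f h0
    rw [← hF] at this
    linarith [hprod ▸ this]
  -- the cofactor q
  obtain ⟨q, hq⟩ : (X - C z₁) ∣ F := Polynomial.dvd_iff_isRoot.mpr hz₁root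
  have hqmonic : q.Monic := (monic_X_sub_C z₁).of_mul_monic_left (hq ▸ hFmonic)
  have hqne : q ≠ 0 := hqmonic.ne_zero
  have hqdeg : q.natDegree = m + 1 := by
    have := hFdeg
    rw [hq, Polynomial.natDegree_mul (Polynomial.X_sub_C_ne_zero z₁) hqne,
        Polynomial.natDegree_X_sub_C] at this
    omega
  -- coefficient relations
  have hcrel : ∀ i, F.coeff (i+1) = q.coeff i - z₁ * q.coeff (i+1) := by
    intro i
    rw [hq, sub_mul, Polynomial.coeff_sub, Polynomial.coeff_X_mul, Polynomial.coeff_C_mul]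
  have hc0 : F.coeff 0 = -z₁ * q.coeff 0 := by
    rw [hq, Polynomial.mul_coeff_zero]; simp
  set T : ℝ := ∑ i ∈ Finset.range (m+1), Complex.abs (q.coeff i) with hT
  set S : ℝ := ∑ i ∈ Finset.range (m+1), Complex.abs (F.coeff i) with hS
  have hqtop : q.coeff (m+1) = 1 := by
    have := hqmonic.coeff_natDegree; rwa [hqdeg] at this
  have key1 : Complex.abs z₁ * T ≤ S + ∑ i ∈ Finset.range m, Complex.abs (q.coeff i) := by
    rw [hT, Finset.mul_sum,
        Finset.sum_range_succ' (fun i => Complex.abs z₁ * Complex.abs (q.coeff i)) m,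
        hS, Finset.sum_range_succ' (fun i => Complex.abs (F.coeff i)) m]
    have e0 : Complex.abs z₁ * Complex.abs (q.coeff 0) = Complex.abs (F.coeff 0) := by
      rw [hc0, map_mul, map_neg_eq_map]
    have estep : ∀ i ∈ Finset.range m, Complex.abs z₁ * Complex.abs (q.coeff (i+1))
        ≤ Complex.abs (F.coeff (i+1)) + Complex.abs (q.coeff i) := by
      intro i _
      calc Complex.abs z₁ * Complex.abs (q.coeff (i+1))
          = ‖q.coeff i - (q.coeff i - z₁ * q.coeff (i+1))‖ := by
            rw [← Complex.norm_eq_abs, ← Complex.norm_eq_abs, ← norm_mul]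
            congr 1; ring
        _ ≤ ‖q.coeff i‖ + ‖q.coeff i - z₁ * q.coeff (i+1)‖ := norm_sub_le _ _
        _ = Complex.abs (F.coeff (i+1)) + Complex.abs (q.coeff i) := by
            rw [hcrel i]
            simp only [Complex.norm_eq_abs]
            ring
    have hsum := Finset.sum_le_sum estep
    rw [Finset.sum_add_distrib] at hsum
    linarith
  have habsF : ∀ i, Complex.abs (F.coeff i) = ((|f.coeff i| : ℤ) : ℝ) := by
    intro i
    rw [hF, Polynomial.coeff_map]
    simp only [algebraMap_int_eq, eq_intCast, Complex.abs_intCast]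
    push_cast; ring
  have key2 : 1 + S = Complex.abs (F.coeff (m+1)) := by
    rw [hS, habsF]
    simp_rw [habsF]
    push_cast
    exact_mod_cast congrArg (fun t : ℤ => (t:ℝ)) hdom.symm
  have key3 : Complex.abs (F.coeff (m+1)) ≤ Complex.abs (q.coeff m) + Complex.abs z₁ := by
    rw [hcrel m, hqtop, mul_one]
    simpa only [← Complex.norm_eq_abs] using norm_sub_le (q.coeff m) z₁
  have hTsucc : T = ∑ i ∈ Finset.range m, Complex.abs (q.coeff i) + Complex.abs (q.coeff m) := by
    rw [hT, Finset.sum_range_succ]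
  have hT1 : T ≤ 1 := by
    by_contra h'
    push_neg at h'
    nlinarith [key1, key2, key3, hz₁, mul_pos (sub_pos.mpr hz₁) (sub_pos.mpr h')]
  -- Lemma C: all roots of q are inside the unit disk
  have lemC : ∀ w : ℂ, q.eval w = 0 → Complex.abs w < 1 := by
    intro w hw
    have hwF : F.eval w = 0 := by rw [hq, Polynomial.eval_mul, hw, mul_zero]
    have hne1 := lemA w hwF
    by_contra h'
    push_neg at h'
    have h'' : 1 < Complex.abs w := lt_of_le_of_ne h' (Ne.symm hne1)
    have heval := Polynomial.eval_eq_sum_range (p := q) (x := w)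
    rw [hqdeg, hw, Finset.sum_range_succ, hqtop, one_mul] at heval
    have hwpos : (0:ℝ) < Complex.abs w := lt_trans one_pos h''
    have habsw : Complex.abs w ^ (m+1) ≤ T * Complex.abs w ^ m := by
      have h8 : Complex.abs (w^(m+1))
          = Complex.abs (-∑ i ∈ Finset.range (m+1), q.coeff i * w^i) := by
        congr 1
        linear_combination -heval
      rw [map_pow, map_neg_eq_map] at h8
      calc Complex.abs w ^ (m+1) = Complex.abs (∑ i ∈ Finset.range (m+1), q.coeff i * w^i) := h8
        _ ≤ ∑ i ∈ Finset.range (m+1), Complex.abs (q.coeff i * w^i) := Complex.abs.sum_le _ _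
        _ ≤ ∑ i ∈ Finset.range (m+1), Complex.abs (q.coeff i) * Complex.abs w ^ m := by
            refine Finset.sum_le_sum fun i hi => ?_
            rw [map_mul, map_pow]
            exact mul_le_mul_of_nonneg_left
              (pow_le_pow_right₀ (le_of_lt h'') (by simpa using Nat.lt_succ_iff.mp (Finset.mem_range.mp hi)))
              (Complex.abs.nonneg _)
        _ = T * Complex.abs w ^ m := by rw [hT, Finset.sum_mul]
    have hpow : Complex.abs w ^ (m+1) = Complex.abs w ^ m * Complex.abs w := pow_succ _ _
    nlinarith [pow_pos hwpos m]
  -- irreducibility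
  constructor
  · intro hu
    have := Polynomial.natDegree_eq_zero_of_isUnit hu
    omega
  · intro g h hgh
    have core : ∀ g h : Polynomial ℤ, g.Monic → h.Monic → f = g * h →
        1 ≤ h.natDegree → (g.map (algebraMap ℤ ℂ)).eval z₁ = 0 → False := by
      intro g h hgm hhm hgh hhd hgz
      set G := g.map (algebraMap ℤ ℂ) with hG
      set H := h.map (algebraMap ℤ ℂ) with hH
      have hFGH : F = G * H := by rw [hF, hgh, Polynomial.map_mul]
      have hHmonic : H.Monic := hhm.map _
      have hHdeg : H.natDegree = h.natDegree := hhm.natDegree_map _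
      obtain ⟨g₂, hg₂⟩ : (X - C z₁) ∣ G := Polynomial.dvd_iff_isRoot.mpr hgz
      have hqe : q = g₂ * H := by
        apply mul_left_cancel₀ (Polynomial.X_sub_C_ne_zero z₁)
        rw [← hq, hFGH, hg₂, mul_assoc]
      have hroots : ∀ r ∈ H.roots, Complex.abs r < 1 := by
        intro r hr
        have hrH : H.eval r = 0 := (Polynomial.mem_roots'.mp hr).2
        apply lemC
        rw [hqe, Polynomial.eval_mul, hrH, mul_zero]
      have hcard : Multiset.card H.roots = h.natDegree := by rw [aux_card_roots, hHdeg]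
      have hH0 : h.coeff 0 ≠ 0 := by
        intro hc
        apply h0
        rw [hgh, Polynomial.mul_coeff_zero, hc, mul_zero]
      have hge1 := habsint h hH0
      rw [← hH] at hge1
      have hlt : (H.roots.map Complex.abs).prod < 1 := by
        apply aux_prod_lt_one
        · intro h'
          rw [Multiset.map_eq_zero] at h'
          rw [h'] at hcard
          simp at hcard
          omega
        · intro x hx
          rw [Multiset.mem_map] at hx
          obtain ⟨r, hr, rfl⟩ := hx
          exact ⟨Complex.abs.nonneg r, hroots r hr⟩
      have hpr := aux_root_prod H hHmonic
      rw [hpr] at hge1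
      linarith
    have claim : ∀ g h : Polynomial ℤ, g.Monic → h.Monic → f = g * h →
        IsUnit g ∨ IsUnit h := by
      intro g h hgm hhm hgh
      by_cases hgd : g.natDegree = 0
      · left
        rw [hgm.natDegree_eq_zero] at hgd
        rw [hgd]; exact isUnit_one
      by_cases hhd : h.natDegree = 0
      · right
        rw [hhm.natDegree_eq_zero] at hhd
        rw [hhd]; exact isUnit_one
      exfalso
      have hz0 : (g.map (algebraMap ℤ ℂ)).eval z₁ * (h.map (algebraMap ℤ ℂ)).eval z₁ = 0 := by
        rw [← Polynomial.eval_mul, ← Polynomial.map_mul, ← hgh]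
        exact hz₁root
      rcases mul_eq_zero.mp hz0 with hgz | hhz
      · exact core g h hgm hhm hgh (by omega) hgz
      · exact core h g hhm hgm (by rw [hgh, mul_comm]) (by omega) hhz
    have hlead : g.leadingCoeff * h.leadingCoeff = 1 := by
      have hl := hmonic.leadingCoeff
      rw [hgh, Polynomial.leadingCoeff_mul] at hl
      exact hl
    rcases Int.mul_eq_one_iff_eq_one_or_neg_one.mp hlead with ⟨hg1, hh1⟩ | ⟨hg1, hh1⟩
    · exact claim g h hg1 hh1 hgh
    · have hgm : (-g).Monic := by
        rw [Polynomial.Monic, Polynomial.leadingCoeff_neg, hg1]; ring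
      have hhm : (-h).Monic := by
        rw [Polynomial.Monic, Polynomial.leadingCoeff_neg, hh1]; ring
      rcases claim (-g) (-h) hgm hhm (by rw [hgh]; ring) with hu | hu
      · left; have := hu.neg; rwa [neg_neg] at this
      · right; have := hu.neg; rwa [neg_neg] at this
end
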